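/- Let G be a finite simple graph and let μ be a positive integer such that χ_DP(G ∨ K_μ) = χ(G) + μ, where χ denotes the ordinary chromatic number. Then for every integer p ≥ μ, χ_DP(G ∨ K_p) = χ(G) + p. -/

import Mathlib

open SimpleGraph

/-- `DPCover G H L` means `(L, H)` is a cover of the graph `G`:
(1) the sets `L u` partition `V(H)`; (2) each `H[L u]` is complete;
(3) for each edge `uv` of `G`, the edges of `H` between `L u` and `L v` form a matching;
(4) there are no edges of `H` between lists of distinct non-adjacent vertices. -/
structure DPCover {V : Type} (G : SimpleGraph V) {W : Type} (H : SimpleGraph W)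
    (L : V → Finset W) : Prop where
  partition : ∀ w : W, ∃! v : V, w ∈ L v
  cliques : ∀ v : V, ∀ a ∈ L v, ∀ b ∈ L v, a ≠ b → H.Adj a b
  matching : ∀ ⦃u v : V⦄, G.Adj u v → ∀ a ∈ L u, ∀ b ∈ L v, ∀ b' ∈ L v,
      H.Adj a b → H.Adj a b' → b = b'
  nonadj : ∀ ⦃u v : V⦄, u ≠ v → ¬ G.Adj u v → ∀ a ∈ L u, ∀ b ∈ L v, ¬ H.Adj a b

/-- A finset is independent in `H` if no two of its elements are adjacent. -/
def IsIndepFinset {W : Type} (H : SimpleGraph W) (S : Finset W) : Prop :=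
  ∀ a ∈ S, ∀ b ∈ S, ¬ H.Adj a b

/-- The independence number of `H`. -/
noncomputable def indepNum {W : Type} [Fintype W] (H : SimpleGraph W) : ℕ :=
  sSup {n : ℕ | ∃ S : Finset W, IsIndepFinset H S ∧ S.card = n}

/-- The DP-chromatic number of `G`: the least `m` such that every `m`-fold cover `(L, H)`
of `G` admits an `H`-coloring, i.e. an independent set in `H` of size `|V(G)|`. -/
noncomputable def chiDP {V : Type} [Fintype V] (G : SimpleGraph V) : ℕ :=
  sInf {m : ℕ | ∀ (W : Type) (_ : Fintype W) (H : SimpleGraph W) (L : V → Finset W),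
    DPCover G H L → (∀ v, (L v).card = m) →
    ∃ S : Finset W, IsIndepFinset H S ∧ S.card = Fintype.card V}

/-- The partial DP `t`-chromatic number of `G`: the minimum of the independence number
`α(H)` over all `t`-fold covers `(L, H)` of `G`. -/
noncomputable def alphaDP {V : Type} [Fintype V] (G : SimpleGraph V) (t : ℕ) : ℕ :=
  sInf {n : ℕ | ∃ (W : Type) (_ : Fintype W) (H : SimpleGraph W) (L : V → Finset W),
    DPCover G H L ∧ (∀ v, (L v).card = t) ∧ _root_.indepNum H = n}

/-- A graph `G` is partially DP-nice if `α_t^{DP}(G) ≥ t|V(G)|/χ_DP(G)` for all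
`t ∈ {1, …, χ_DP(G)}`. -/
def PartiallyDPNice {V : Type} [Fintype V] (G : SimpleGraph V) : Prop :=
  ∀ t : ℕ, 1 ≤ t → t ≤ chiDP G →
    (t * Fintype.card V : ℚ) / (chiDP G : ℚ) ≤ (alphaDP G t : ℚ)

/-- The join `G ∨ K_p` of `G` with the complete graph `K_p`: disjoint copies of `G` and
`K_p` together with all edges between them. -/
def joinComplete {V : Type} (G : SimpleGraph V) (p : ℕ) : SimpleGraph (V ⊕ Fin p) where
  Adj x y :=
    match x, y with
    | .inl a, .inl b => G.Adj a b
    | .inr a, .inr b => a ≠ b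
    | .inl _, .inr _ => True
    | .inr _, .inl _ => True
  symm := by
    constructor
    rintro (a | a) (b | b) h
    · exact G.adj_symm h
    · trivial
    · trivial
    · exact Ne.symm h
  loopless := by
    constructor
    rintro (a | a) h
    · exact G.loopless.irrefl a h
    · exact h rfl

/-- The chromatic number of a graph: the least `n` such that `G` is `n`-colorable. -/
noncomputable def chromNum {V : Type} (G : SimpleGraph V) : ℕ :=
  sInf {n : ℕ | G.Colorable n}

/-- Transversal: an independent set of full size meets every list. -/
lemma indep_meets_lists {V W : Type} [Fintype V] (G : SimpleGraph V) (H : SimpleGraph W)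
    (L : V → Finset W) (hc : DPCover G H L) (S : Finset W) (hS : IsIndepFinset H S)
    (hcard : S.card = Fintype.card V) : ∀ v : V, ∃ w ∈ S, w ∈ L v := by
  classical
  have hf : ∀ w : W, ∃ v, w ∈ L v := fun w => (hc.partition w).exists
  let f : {x // x ∈ S} → V := fun x => (hf x.1).choose
  have hfmem : ∀ x : {x // x ∈ S}, x.1 ∈ L (f x) := fun x => (hf x.1).choose_spec
  have hinj : Function.Injective f := by
    intro a b hab
    by_contra hne
    have hne' : a.1 ≠ b.1 := fun h => hne (Subtype.ext h)
    exact hS a.1 a.2 b.1 b.2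
      (hc.cliques (f a) a.1 (hfmem a) b.1 (by rw [hab]; exact hfmem b) hne')
  have hsurj : Function.Surjective f := by
    have hcc : Fintype.card {x // x ∈ S} = Fintype.card V := by
      rw [Fintype.card_coe, hcard]
    exact ((Fintype.bijective_iff_injective_and_card f).mpr ⟨hinj, hcc⟩).2
  intro v
  obtain ⟨x, hx⟩ := hsurj v
  exact ⟨x.1, x.2, hx ▸ hfmem x⟩

/-- The canonical cover, whose colorings are proper colorings. -/
def canH {V : Type} (G : SimpleGraph V) (m : ℕ) : SimpleGraph (V × Fin m) where
  Adj a b := (a.1 = b.1 ∧ a.2 ≠ b.2) ∨ (G.Adj a.1 b.1 ∧ a.2 = b.2)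
  symm := by
    constructor
    rintro a b (⟨h1, h2⟩ | ⟨h1, h2⟩)
    · exact Or.inl ⟨h1.symm, h2.symm⟩
    · exact Or.inr ⟨h1.symm, h2.symm⟩
  loopless := by
    constructor
    rintro a (⟨_, h⟩ | ⟨h, _⟩)
    · exact h rfl
    · exact G.loopless.irrefl _ h

lemma colorable_of_dp {V : Type} [Fintype V] (G : SimpleGraph V) (m : ℕ)
    (hm : ∀ (W : Type) (_ : Fintype W) (H : SimpleGraph W) (L : V → Finset W),
      DPCover G H L → (∀ v, (L v).card = m) →
      ∃ S : Finset W, IsIndepFinset H S ∧ S.card = Fintype.card V) :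
    G.Colorable m := by
  classical
  set L : V → Finset (V × Fin m) := fun u => Finset.univ.image (Prod.mk u) with hL
  have hmem : ∀ u : V, ∀ x : V × Fin m, x ∈ L u ↔ x.1 = u := by
    intro u x
    simp only [hL, Finset.mem_image, Finset.mem_univ, true_and]
    constructor
    · rintro ⟨j, rfl⟩; rfl
    · rintro rfl; exact ⟨x.2, rfl⟩
  have hcov : DPCover G (canH G m) L := by
    constructor
    · intro w
      exact ⟨w.1, (hmem w.1 w).mpr rfl, fun v hv => ((hmem v w).mp hv).symm⟩
    · intro v a ha b hb hne
      have h1 := (hmem v a).mp ha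
      have h2 := (hmem v b).mp hb
      left
      refine ⟨h1.trans h2.symm, fun h => hne ?_⟩
      exact Prod.ext (h1.trans h2.symm) h
    · intro u v huv a ha b hb b' hb' h1 h2
      have hau := (hmem u a).mp ha
      have hbv := (hmem v b).mp hb
      have hbv' := (hmem v b').mp hb'
      have hne : u ≠ v := G.ne_of_adj huv
      rcases h1 with ⟨h, _⟩ | ⟨_, h⟩
      · exact absurd (hau ▸ hbv ▸ h) hne
      rcases h2 with ⟨h', _⟩ | ⟨_, h'⟩
      · exact absurd (hau ▸ hbv' ▸ h') hne
      · exact Prod.ext (hbv.trans hbv'.symm) (h.symm.trans h')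
    · intro u v hne hnadj a ha b hb hadj
      have hau := (hmem u a).mp ha
      have hbv := (hmem v b).mp hb
      rcases hadj with ⟨h, _⟩ | ⟨h, _⟩
      · exact hne (hau ▸ hbv ▸ h)
      · exact hnadj (hau ▸ hbv ▸ h)
  have hcard : ∀ v : V, (L v).card = m := by
    intro v
    rw [hL]
    rw [Finset.card_image_of_injective _ (fun i j h => congrArg Prod.snd h)]
    simp
  obtain ⟨S, hSindep, hScard⟩ := hm (V × Fin m) inferInstance (canH G m) L hcov hcard
  have htrans := indep_meets_lists G (canH G m) L hcov S hSindep hScard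
  choose w hwS hwL using htrans
  let c : V → Fin m := fun v => (w v).2
  have hproper : ∀ {u v : V}, G.Adj u v → c u ≠ c v := by
    intro u v huv hcc
    have hu : w u = (u, c u) := Prod.ext ((hmem u (w u)).mp (hwL u)) rfl
    have hv : w v = (v, c v) := Prod.ext ((hmem v (w v)).mp (hwL v)) rfl
    apply hSindep (w u) (hwS u) (w v) (hwS v)
    rw [hu, hv]
    exact Or.inr ⟨huv, hcc⟩
  have C : G.Coloring (Fin m) := SimpleGraph.Coloring.mk c hproper
  simpa using C.colorable

lemma chromNum_add_le {V : Type} [Fintype V] (G : SimpleGraph V) (p m : ℕ)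
    (h : (joinComplete G p).Colorable m) : chromNum G + p ≤ m := by
  classical
  obtain ⟨C⟩ := h
  have hinr : Function.Injective (fun i : Fin p => C (Sum.inr i)) := by
    intro i j hij
    by_contra hne
    exact C.valid (show (joinComplete G p).Adj (Sum.inr i) (Sum.inr j) from hne) hij
  set T : Finset (Fin m) := Finset.univ.image (fun i : Fin p => C (Sum.inr i)) with hT
  have hTcard : T.card = p := by
    rw [hT, Finset.card_image_of_injective _ hinr]; simp
  have hnotin : ∀ v : V, C (Sum.inl v) ∉ T := by
    intro v hv
    rw [hT, Finset.mem_image] at hv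
    obtain ⟨i, _, hi⟩ := hv
    exact C.valid (show (joinComplete G p).Adj (Sum.inl v) (Sum.inr i) from trivial) hi.symm
  have hpm : p ≤ m := by
    calc p = T.card := hTcard.symm
    _ ≤ Finset.univ.card := Finset.card_le_card (Finset.subset_univ T)
    _ = m := by simp
  have C' : G.Coloring {x : Fin m // x ∈ Finset.univ \ T} := by
    refine SimpleGraph.Coloring.mk
      (fun v => ⟨C (Sum.inl v), Finset.mem_sdiff.mpr ⟨Finset.mem_univ _, hnotin v⟩⟩) ?_
    intro u v huv hc
    exact C.valid (show (joinComplete G p).Adj (Sum.inl u) (Sum.inl v) from huv)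
      (congrArg Subtype.val hc)
  have hcol : G.Colorable (m - p) := by
    have hc2 := C'.colorable
    rw [Fintype.card_coe, Finset.card_sdiff_of_subset (Finset.subset_univ T), hTcard] at hc2
    simpa using hc2
  have : chromNum G ≤ m - p := Nat.sInf_le hcol
  omega

/-- Key step: if every `m`-fold cover of `G ∨ K_p` is colorable, then every
`(m+1)`-fold cover of `G ∨ K_{p+1}` is colorable. -/
lemma step_lemma {V : Type} [Fintype V] (G : SimpleGraph V) (p m : ℕ)
    (hm : ∀ (W : Type) (_ : Fintype W) (H : SimpleGraph W) (L : (V ⊕ Fin p) → Finset W),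
      DPCover (joinComplete G p) H L → (∀ v, (L v).card = m) →
      ∃ S : Finset W, IsIndepFinset H S ∧ S.card = Fintype.card (V ⊕ Fin p)) :
    ∀ (W : Type) (_ : Fintype W) (H : SimpleGraph W) (L : (V ⊕ Fin (p+1)) → Finset W),
      DPCover (joinComplete G (p+1)) H L → (∀ v, (L v).card = m + 1) →
      ∃ S : Finset W, IsIndepFinset H S ∧ S.card = Fintype.card (V ⊕ Fin (p+1)) := by
  intro W instW H L hcov hcard
  classical
  set v₀ : V ⊕ Fin (p+1) := Sum.inr (Fin.last p) with hv₀
  have hL0 : (L v₀).Nonempty := by rw [← Finset.card_pos, hcard]; omega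
  obtain ⟨w₀, hw₀⟩ := hL0
  set e : V ⊕ Fin p → V ⊕ Fin (p+1) := Sum.map id Fin.castSucc with he
  have einj : Function.Injective e := by
    rw [he]
    exact Function.Injective.sumMap (fun _ _ h => h) (Fin.castSucc_injective p)
  have hene : ∀ u, e u ≠ v₀ := by
    rintro (a | a) h <;>
      simp only [he, hv₀, Sum.map_inl, Sum.map_inr, id_eq] at h
    · exact Sum.inl_ne_inr h
    · exact (Fin.castSucc_lt_last a).ne (Sum.inr.inj h)
  have hadj0 : ∀ u, (joinComplete G (p+1)).Adj v₀ (e u) := by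
    rintro (a | a)
    · trivial
    · exact fun h => (Fin.castSucc_lt_last a).ne' h
  have hadj_e : ∀ {u v}, (joinComplete G p).Adj u v → (joinComplete G (p+1)).Adj (e u) (e v) := by
    rintro (a | a) (b | b) h
    · exact h
    · trivial
    · trivial
    · exact fun hc => h (Fin.castSucc_inj.mp hc)
  have hadj_e' : ∀ {u v}, (joinComplete G (p+1)).Adj (e u) (e v) → (joinComplete G p).Adj u v := by
    rintro (a | a) (b | b) h
    · exact h
    · trivial
    · trivial
    · exact fun hc => h (congrArg Fin.castSucc hc)
  -- remove neighbors of w₀ from the lists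
  have hMcard : ∀ u, m ≤ ((L (e u)).filter (fun x => ¬ H.Adj w₀ x)).card := by
    intro u
    have h1 : ((L (e u)).filter (fun x => H.Adj w₀ x)).card ≤ 1 := by
      apply Finset.card_le_one.mpr
      intro a ha b hb
      rw [Finset.mem_filter] at ha hb
      exact hcov.matching (hadj0 u) w₀ hw₀ a ha.1 b hb.1 ha.2 hb.2
    have h2 := Finset.card_filter_add_card_filter_not
      (s := L (e u)) (fun x => H.Adj w₀ x)
    rw [hcard (e u)] at h2
    omega
  choose L' hL'sub hL'card using fun u => Finset.exists_subset_card_eq (hMcard u)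
  have hsubL : ∀ u, L' u ⊆ L (e u) := fun u => (hL'sub u).trans (Finset.filter_subset _ _)
  have hnoadj : ∀ u, ∀ x ∈ L' u, ¬ H.Adj w₀ x := fun u x hx =>
    (Finset.mem_filter.mp (hL'sub u hx)).2
  set B : Finset W := Finset.univ.biUnion L' with hB
  have hmemB : ∀ u, ∀ x ∈ L' u, x ∈ B := by
    intro u x hx
    rw [hB, Finset.mem_biUnion]
    exact ⟨u, Finset.mem_univ u, hx⟩
  set H' : SimpleGraph {x : W // x ∈ B} := H.comap Subtype.val with hH'
  set L'' : (V ⊕ Fin p) → Finset {x : W // x ∈ B} :=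
    fun u => (L' u).subtype (· ∈ B) with hL''
  have hmem'' : ∀ u, ∀ x : {x : W // x ∈ B}, x ∈ L'' u ↔ x.1 ∈ L' u := by
    intro u x; rw [hL'']; exact Finset.mem_subtype
  have huniq : ∀ (x : W) u v, x ∈ L' u → x ∈ L' v → u = v := by
    intro x u v hu hv
    exact einj ((hcov.partition x).unique (hsubL u hu) (hsubL v hv))
  have hcov'' : DPCover (joinComplete G p) H' L'' := by
    constructor
    · intro x
      obtain ⟨u, _, hu⟩ := Finset.mem_biUnion.mp x.2
      exact ⟨u, (hmem'' u x).mpr hu, fun v hv => huniq x.1 v u ((hmem'' v x).mp hv) hu⟩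
    · intro v a ha b hb hne
      exact hcov.cliques (e v) a.1 (hsubL v ((hmem'' v a).mp ha))
        b.1 (hsubL v ((hmem'' v b).mp hb)) (fun h => hne (Subtype.ext h))
    · intro u v huv a ha b hb b' hb' h1 h2
      exact Subtype.ext (hcov.matching (hadj_e huv) a.1 (hsubL u ((hmem'' u a).mp ha))
        b.1 (hsubL v ((hmem'' v b).mp hb)) b'.1 (hsubL v ((hmem'' v b').mp hb')) h1 h2)
    · intro u v hne hnadj a ha b hb
      exact hcov.nonadj (fun h => hne (einj h)) (fun h => hnadj (hadj_e' h))
        a.1 (hsubL u ((hmem'' u a).mp ha)) b.1 (hsubL v ((hmem'' v b).mp hb))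
  have hcard'' : ∀ u, (L'' u).card = m := by
    intro u
    rw [hL'', Finset.card_subtype, Finset.filter_true_of_mem (fun x hx => hmemB u x hx),
      hL'card]
  obtain ⟨S', hS'indep, hS'card⟩ := hm {x : W // x ∈ B} inferInstance H' L'' hcov'' hcard''
  set S : Finset W := insert w₀ (S'.image Subtype.val) with hS
  have himg : ∀ x ∈ S'.image Subtype.val, ¬ H.Adj w₀ x := by
    intro x hx
    obtain ⟨y, _, rfl⟩ := Finset.mem_image.mp hx
    obtain ⟨u, _, hu⟩ := Finset.mem_biUnion.mp y.2
    exact hnoadj u y.1 hu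
  refine ⟨S, ?_, ?_⟩
  · intro a ha b hb hab
    rw [hS, Finset.mem_insert] at ha hb
    rcases ha with rfl | ha
    · rcases hb with rfl | hb
      · exact H.loopless.irrefl _ hab
      · exact himg b hb hab
    · rcases hb with rfl | hb
      · exact himg a ha (H.adj_symm hab)
      · obtain ⟨y, hy, rfl⟩ := Finset.mem_image.mp ha
        obtain ⟨z, hz, rfl⟩ := Finset.mem_image.mp hb
        exact hS'indep y hy z hz hab
  · have hw₀img : w₀ ∉ S'.image Subtype.val := by
      intro hmem
      obtain ⟨y, _, hy⟩ := Finset.mem_image.mp hmem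
      obtain ⟨u, _, hu⟩ := Finset.mem_biUnion.mp y.2
      have : e u = v₀ := (hcov.partition y.1).unique (hsubL u hu) (hy ▸ hw₀)
      exact hene u this
    rw [hS, Finset.card_insert_of_notMem hw₀img,
      Finset.card_image_of_injective _ Subtype.val_injective, hS'card]
    simp only [Fintype.card_sum, Fintype.card_fin]
    omega

/-- If `χ_DP(G ∨ K_μ) = χ(G) + μ` for some positive integer `μ`, then
`χ_DP(G ∨ K_p) = χ(G) + p` for every `p ≥ μ`. -/
theorem chiDP_joinComplete_eventually {V : Type} [Fintype V] (G : SimpleGraph V)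
    (μ : ℕ) (hμ : 0 < μ) (hbase : chiDP (joinComplete G μ) = chromNum G + μ) :
    ∀ p : ℕ, μ ≤ p → chiDP (joinComplete G p) = chromNum G + p := by
  have hdef : ∀ q : ℕ, chiDP (joinComplete G q) =
      sInf {m : ℕ | ∀ (W : Type) (_ : Fintype W) (H : SimpleGraph W)
        (L : (V ⊕ Fin q) → Finset W),
        DPCover (joinComplete G q) H L → (∀ v, (L v).card = m) →
        ∃ S : Finset W, IsIndepFinset H S ∧ S.card = Fintype.card (V ⊕ Fin q)} :=
    fun q => rfl
  have key : ∀ p : ℕ, μ ≤ p →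
      ∀ (W : Type) (_ : Fintype W) (H : SimpleGraph W) (L : (V ⊕ Fin p) → Finset W),
        DPCover (joinComplete G p) H L → (∀ v, (L v).card = chromNum G + p) →
        ∃ S : Finset W, IsIndepFinset H S ∧ S.card = Fintype.card (V ⊕ Fin p) := by
    intro p hp
    induction p, hp using Nat.le_induction with
    | base =>
        have hne : {m : ℕ | ∀ (W : Type) (_ : Fintype W) (H : SimpleGraph W)
            (L : (V ⊕ Fin μ) → Finset W),
            DPCover (joinComplete G μ) H L → (∀ v, (L v).card = m) →
            ∃ S : Finset W, IsIndepFinset H S ∧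
              S.card = Fintype.card (V ⊕ Fin μ)}.Nonempty := by
          by_contra hE
          rw [Set.not_nonempty_iff_eq_empty] at hE
          rw [hdef μ, hE, Nat.sInf_empty] at hbase
          omega
        have hmem := Nat.sInf_mem hne
        rw [← hdef μ, hbase] at hmem
        exact hmem
    | succ p hp ih =>
        exact step_lemma G p (chromNum G + p) ih
  intro p hp
  rw [hdef p]
  apply le_antisymm
  · exact Nat.sInf_le (key p hp)
  · have hmemk : (chromNum G + p) ∈ {m : ℕ | ∀ (W : Type) (_ : Fintype W)
        (H : SimpleGraph W) (L : (V ⊕ Fin p) → Finset W),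
        DPCover (joinComplete G p) H L → (∀ v, (L v).card = m) →
        ∃ S : Finset W, IsIndepFinset H S ∧ S.card = Fintype.card (V ⊕ Fin p)} :=
      key p hp
    apply le_csInf ⟨chromNum G + p, hmemk⟩
    intro m hmem
    exact chromNum_add_le G p m (colorable_of_dp (joinComplete G p) m hmem)
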